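/- (ℓ∞ gradient bound for sparse differences, inequality (A.16) of the paper.) Suppose in addition that every entry of the design matrix satisfies |x_{i,l}| ≤ c₂ for a constant c₂ > 0. If β₁, β₂ ∈ ℝ^p are such that β₁ − β₂ has at most s nonzero coordinates, then ‖∇L(β₁) − ∇L(β₂)‖_∞ ≤ μ c₂² s ‖β₁ − β₂‖_∞. -/

import Mathlib

open scoped BigOperators

noncomputable section

/-- Gradient of the GLM negative log-likelihood, written coordinatewise:
`(∇L(β))ₗ = (1/N) ∑ᵢ (b'(Xᵢᵀβ) − yᵢ) x_{i,l}`.  Here `Fin p → ℝ` carries the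
sup-norm. -/
def glmGradPi {N p : ℕ} (X : Fin N → Fin p → ℝ) (y : Fin N → ℝ)
    (b : ℝ → ℝ) (β : Fin p → ℝ) : Fin p → ℝ :=
  fun l => (1 / (N : ℝ)) * ∑ i, (deriv b (∑ l', X i l' * β l') - y i) * X i l

/-- ℓ∞ gradient bound for sparse differences (inequality (A.16) of the paper):
if all design entries satisfy `|x_{i,l}| ≤ c₂` and `β₁ − β₂` has at most `s` nonzero
coordinates, then `‖∇L(β₁) − ∇L(β₂)‖_∞ ≤ μ c₂² s ‖β₁ − β₂‖_∞`. -/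
theorem glm_grad_sparse_sup_bound
    {N p : ℕ} (hN : 0 < N)
    (X : Fin N → Fin p → ℝ) (y : Fin N → ℝ)
    (b : ℝ → ℝ) (μ : ℝ) (hμ : 0 < μ) (hb : ContDiff ℝ 2 b)
    (hb'' : ∀ θ : ℝ, 0 ≤ deriv (deriv b) θ ∧ deriv (deriv b) θ ≤ μ)
    (c₂ : ℝ) (hc₂ : 0 < c₂) (hX : ∀ i l, |X i l| ≤ c₂)
    (s : ℕ) (β₁ β₂ : Fin p → ℝ)
    (hsparse : {j | β₁ j ≠ β₂ j}.ncard ≤ s) :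
    ‖glmGradPi X y b β₁ - glmGradPi X y b β₂‖ ≤ μ * c₂ ^ 2 * s * ‖β₁ - β₂‖ := by
  have hμ0 : (0:ℝ) ≤ μ := hμ.le
  have hc0 : (0:ℝ) ≤ c₂ := hc₂.le
  set M := ‖β₁ - β₂‖ with hMdef
  have hM0 : 0 ≤ M := norm_nonneg _
  have hcoord : ∀ j, |β₁ j - β₂ j| ≤ M := by
    intro j
    have := norm_le_pi_norm (β₁ - β₂) j
    simpa [Real.norm_eq_abs] using this
  -- Lipschitz bound on deriv b
  have hb1 : ContDiff ℝ 1 (deriv b) := by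
    have h2 : ContDiff ℝ (1+1) b := by
      rw [one_add_one_eq_two]; exact hb
    exact (contDiff_succ_iff_deriv.mp h2).2.2
  have hdiff : Differentiable ℝ (deriv b) := hb1.differentiable one_ne_zero
  have hL : LipschitzWith μ.toNNReal (deriv b) := by
    apply lipschitzWith_of_nnnorm_deriv_le hdiff
    intro x
    rw [← NNReal.coe_le_coe, coe_nnnorm, Real.coe_toNNReal μ hμ0, Real.norm_eq_abs,
      abs_of_nonneg (hb'' x).1]
    exact (hb'' x).2
  have hlip : ∀ a a' : ℝ, |deriv b a - deriv b a'| ≤ μ * |a - a'| := by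
    intro a a'
    have := hL.dist_le_mul a a'
    rwa [Real.dist_eq, Real.dist_eq, Real.coe_toNNReal μ hμ0] at this
  -- sparse set
  have hfin : {j | β₁ j ≠ β₂ j}.Finite := Set.toFinite _
  set T := hfin.toFinset with hT
  have hTcard : (T.card : ℝ) ≤ s := by
    have h1 : {j | β₁ j ≠ β₂ j}.ncard = T.card := Set.ncard_eq_toFinset_card _ hfin
    exact_mod_cast h1 ▸ hsparse
  have hsum : ∀ i : Fin N,
      |(∑ l', X i l' * β₁ l') - ∑ l', X i l' * β₂ l'| ≤ c₂ * s * M := by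
    intro i
    have h1 : (∑ l', X i l' * β₁ l') - ∑ l', X i l' * β₂ l'
        = ∑ l' ∈ T, X i l' * (β₁ l' - β₂ l') := by
      rw [← Finset.sum_sub_distrib,
        ← Finset.sum_subset (Finset.subset_univ T)]
      · exact Finset.sum_congr rfl fun l' _ => by ring
      · intro l' _ hl'
        have hEq : β₁ l' = β₂ l' := by
          by_contra h
          exact hl' (hfin.mem_toFinset.mpr h)
        rw [hEq]; ring
    rw [h1]
    calc |∑ l' ∈ T, X i l' * (β₁ l' - β₂ l')|
        ≤ ∑ l' ∈ T, |X i l' * (β₁ l' - β₂ l')| := Finset.abs_sum_le_sum_abs _ _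
      _ ≤ ∑ _l' ∈ T, c₂ * M := by
          refine Finset.sum_le_sum fun j _ => ?_
          rw [abs_mul]
          exact mul_le_mul (hX i j) (hcoord j) (abs_nonneg _) hc0
      _ = T.card * (c₂ * M) := by rw [Finset.sum_const, nsmul_eq_mul]
      _ ≤ s * (c₂ * M) := mul_le_mul_of_nonneg_right hTcard (by positivity)
      _ = c₂ * s * M := by ring
  rw [pi_norm_le_iff_of_nonneg (by positivity)]
  intro l
  have hdl : (glmGradPi X y b β₁ - glmGradPi X y b β₂) l
      = (1 / (N:ℝ)) * ∑ i, (deriv b (∑ l', X i l' * β₁ l')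
          - deriv b (∑ l', X i l' * β₂ l')) * X i l := by
    simp only [Pi.sub_apply, glmGradPi]
    rw [← mul_sub, ← Finset.sum_sub_distrib]
    congr 1
    exact Finset.sum_congr rfl fun i _ => by ring
  have hterm : ∀ i : Fin N,
      |(deriv b (∑ l', X i l' * β₁ l') - deriv b (∑ l', X i l' * β₂ l')) * X i l|
        ≤ μ * c₂ ^ 2 * s * M := by
    intro i
    rw [abs_mul]
    calc |deriv b (∑ l', X i l' * β₁ l') - deriv b (∑ l', X i l' * β₂ l')| * |X i l|
        ≤ (μ * (c₂ * s * M)) * c₂ := by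
          refine mul_le_mul ?_ (hX i l) (abs_nonneg _) (by positivity)
          calc |deriv b (∑ l', X i l' * β₁ l') - deriv b (∑ l', X i l' * β₂ l')|
              ≤ μ * |(∑ l', X i l' * β₁ l') - ∑ l', X i l' * β₂ l'| := hlip _ _
            _ ≤ μ * (c₂ * s * M) := mul_le_mul_of_nonneg_left (hsum i) hμ0
      _ = μ * c₂ ^ 2 * s * M := by ring
  rw [Real.norm_eq_abs, hdl, abs_mul]
  have hNpos : (0:ℝ) < N := by exact_mod_cast hN
  calc |1 / (N:ℝ)| * |∑ i, (deriv b (∑ l', X i l' * β₁ l')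
          - deriv b (∑ l', X i l' * β₂ l')) * X i l|
      ≤ (1 / (N:ℝ)) * ((N:ℝ) * (μ * c₂ ^ 2 * s * M)) := by
        rw [abs_of_nonneg (by positivity : (0:ℝ) ≤ 1 / (N:ℝ))]
        refine mul_le_mul_of_nonneg_left ?_ (by positivity)
        calc |∑ i, (deriv b (∑ l', X i l' * β₁ l')
                - deriv b (∑ l', X i l' * β₂ l')) * X i l|
            ≤ ∑ i, |(deriv b (∑ l', X i l' * β₁ l')
                - deriv b (∑ l', X i l' * β₂ l')) * X i l| :=
              Finset.abs_sum_le_sum_abs _ _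
          _ ≤ ∑ _i : Fin N, (μ * c₂ ^ 2 * s * M) :=
              Finset.sum_le_sum fun i _ => hterm i
          _ = (N:ℝ) * (μ * c₂ ^ 2 * s * M) := by
              rw [Finset.sum_const, nsmul_eq_mul, Finset.card_univ, Fintype.card_fin]
    _ = μ * c₂ ^ 2 * s * M := by field_simp
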